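/- Let $(S_k)_{k\ge1}$ be real random variables, $p\ge 1$. If $\sum_{n=1}^{\infty} n^{-1} P\big(\max_{1\le k\le n}|S_k| > \varepsilon n^{1/p}\big) < \infty$ for every $\varepsilon>0$, then $S_n/n^{1/p} \to 0$ almost surely. -/

import Mathlib

open MeasureTheory Filter Set
open scoped ENNReal NNReal

/-- from weighted complete convergence of maxima to the
Marcinkiewicz–Zygmund strong law. -/
theorem stmt_12 {Ω : Type*} [MeasurableSpace Ω] (μ : Measure Ω) [IsProbabilityMeasure μ]
    (p : ℝ) (hp : 1 ≤ p)
    (S : ℕ → Ω → ℝ) (hS : ∀ k, Measurable (S k))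
    (hsum : ∀ ε : ℝ, 0 < ε →
      (∑' n : ℕ, (((n : ℝ≥0∞) + 1))⁻¹ *
          μ {ω | ∃ k : ℕ, 1 ≤ k ∧ k ≤ n + 1 ∧
            ε * ((n : ℝ) + 1) ^ (1 / p) < |S k ω|}) < ⊤) :
    ∀ᵐ ω ∂μ, Tendsto (fun n : ℕ => S n ω / (n : ℝ) ^ (1 / p)) atTop (nhds 0) := by
  have hp0 : (0:ℝ) < p := lt_of_lt_of_le one_pos hp
  have hq0 : (0:ℝ) ≤ 1/p := by positivity
  have hq1 : 1/p ≤ 1 := by rw [div_le_one hp0]; exact hp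
  have key : ∀ ε : ℝ, 0 < ε → ∀ᵐ ω ∂μ, ∀ᶠ n : ℕ in atTop,
      |S n ω| ≤ 4*ε*(n:ℝ)^(1/p) := by
    intro ε hε
    set B : ℕ → Set Ω := fun n => {ω | ∃ k : ℕ, 1 ≤ k ∧ k ≤ n + 1 ∧
      ε * ((n : ℝ) + 1) ^ (1 / p) < |S k ω|} with hB
    set C : ℕ → Set Ω := fun k => {ω | ∃ j : ℕ, 1 ≤ j ∧ j ≤ 2^k ∧
      ε * ((2:ℝ)^(k+1)) ^ (1 / p) < |S j ω|} with hC
    set f : ℕ → ℝ≥0∞ := fun n => (((n : ℝ≥0∞) + 1))⁻¹ * μ (B n) with hf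
    have hsub : ∀ k, ∀ n ∈ Finset.Ico (2^k) (2^(k+1)), C k ⊆ B n := by
      intro k n hn ω hω
      obtain ⟨j, hj1, hj2, hj3⟩ := hω
      simp only [Finset.mem_Ico] at hn
      refine ⟨j, hj1, le_trans hj2 (by omega), lt_of_le_of_lt ?_ hj3⟩
      have hcast : ((n:ℝ)+1) ≤ (2:ℝ)^(k+1) := by
        have : ((n+1 : ℕ):ℝ) ≤ ((2^(k+1) : ℕ):ℝ) := Nat.cast_le.mpr hn.2
        push_cast at this
        linarith
      exact mul_le_mul_of_nonneg_left (Real.rpow_le_rpow (by positivity) hcast hq0) hε.le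
    have claimA : ∀ k, μ (C k) ≤ 2 * ∑ n ∈ Finset.Ico (2^k) (2^(k+1)), f n := by
      intro k
      have hlow : ∀ n ∈ Finset.Ico (2^k) (2^(k+1)),
          ((2:ℝ≥0∞)^(k+1))⁻¹ * μ (C k) ≤ f n := by
        intro n hn
        have hle : ((n:ℝ≥0∞)+1) ≤ (2:ℝ≥0∞)^(k+1) := by
          simp only [Finset.mem_Ico] at hn
          have : ((n+1 : ℕ):ℝ≥0∞) ≤ ((2^(k+1) : ℕ):ℝ≥0∞) := Nat.cast_le.mpr hn.2
          push_cast at this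
          exact this
        exact mul_le_mul' (ENNReal.inv_le_inv' hle) (measure_mono (hsub k n hn))
      have hcard : (Finset.Ico (2^k) (2^(k+1))).card = 2^k := by
        rw [Nat.card_Ico, pow_succ]
        set m := 2^k
        omega
      have hsumlow : (2:ℝ≥0∞)^k * (((2:ℝ≥0∞)^(k+1))⁻¹ * μ (C k))
          ≤ ∑ n ∈ Finset.Ico (2^k) (2^(k+1)), f n := by
        calc (2:ℝ≥0∞)^k * (((2:ℝ≥0∞)^(k+1))⁻¹ * μ (C k))
            = (Finset.Ico (2^k) (2^(k+1))).card • (((2:ℝ≥0∞)^(k+1))⁻¹ * μ (C k)) := by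
              rw [hcard, nsmul_eq_mul]; push_cast; ring
          _ ≤ _ := Finset.card_nsmul_le_sum _ _ _ hlow
      have h0 : ((2:ℝ≥0∞)^(k+1)) ≠ 0 := by positivity
      have hne : ((2:ℝ≥0∞)^(k+1)) ≠ ⊤ := by
        exact ENNReal.pow_ne_top (by norm_num)
      calc μ (C k) = 2 * ((2:ℝ≥0∞)^k * (((2:ℝ≥0∞)^(k+1))⁻¹ * μ (C k))) := by
            rw [← mul_assoc, ← mul_assoc, ← pow_succ', ENNReal.mul_inv_cancel h0 hne, one_mul]
        _ ≤ 2 * ∑ n ∈ Finset.Ico (2^k) (2^(k+1)), f n := by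
            exact mul_le_mul_right hsumlow 2
    have hrange : ∀ K, ∑ k ∈ Finset.range K, ∑ n ∈ Finset.Ico (2^k) (2^(k+1)), f n
        = ∑ n ∈ Finset.Ico 1 (2^K), f n := by
      intro K
      induction K with
      | zero => simp
      | succ K ih =>
        rw [Finset.sum_range_succ, ih, Finset.sum_Ico_consecutive]
        · exact Nat.one_le_two_pow
        · exact Nat.pow_le_pow_right (by norm_num) (Nat.le_succ K)
    have hCsum : ∑' k, μ (C k) ≠ ⊤ := by
      have h2 : ∑' k, μ (C k) ≤ 2 * ∑' n, f n := by
        rw [ENNReal.tsum_eq_iSup_nat]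
        refine iSup_le fun K => ?_
        calc ∑ k ∈ Finset.range K, μ (C k)
            ≤ ∑ k ∈ Finset.range K, 2 * ∑ n ∈ Finset.Ico (2^k) (2^(k+1)), f n :=
              Finset.sum_le_sum fun k _ => claimA k
          _ = 2 * ∑ n ∈ Finset.Ico 1 (2^K), f n := by
              rw [← Finset.mul_sum, hrange]
          _ ≤ 2 * ∑' n, f n := mul_le_mul_right (ENNReal.sum_le_tsum _) 2
      have hfin : (2:ℝ≥0∞) * ∑' n, f n < ⊤ :=
        ENNReal.mul_lt_top (by norm_num) (hsum ε hε)
      exact (lt_of_le_of_lt h2 hfin).ne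
    have hBC := measure_setOf_frequently_eq_zero (μ := μ) hCsum
    have hae : ∀ᵐ ω ∂μ, ∀ᶠ k in atTop, ω ∉ C k := by
      rw [ae_iff]
      have hset : {ω | ¬∀ᶠ k in atTop, ω ∉ C k} = {ω | ∃ᶠ k in atTop, ω ∈ C k} := by
        ext ω
        simp [Filter.not_eventually, Filter.frequently_atTop]
      rw [hset]
      exact hBC
    filter_upwards [hae] with ω hω
    obtain ⟨K, hK⟩ := Filter.eventually_atTop.mp hω
    rw [Filter.eventually_atTop]
    refine ⟨2^K + 1, fun n hn => ?_⟩
    have hpow1 : 1 ≤ 2^K := Nat.one_le_two_pow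
    have hn0 : n ≠ 0 := by omega
    set k := Nat.log 2 n with hk
    have h1 : 2^k ≤ n := Nat.pow_log_le_self 2 hn0
    have h2 : n < 2^(k+1) := Nat.lt_pow_succ_log_self (by norm_num) n
    have hkK : K ≤ k + 1 := by
      have : K ≤ Nat.log 2 n := (Nat.le_log_iff_pow_le (by norm_num) hn0).mpr (by omega)
      omega
    have hnotC := hK (k+1) hkK
    by_contra hcon
    push_neg at hcon
    apply hnotC
    refine ⟨n, by omega, by omega, lt_of_le_of_lt ?_ hcon⟩
    -- ε * (2^(k+2))^(1/p) ≤ 4 * ε * n^(1/p)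
    have hb1 : ((2:ℝ)^(k+1+1)) ≤ 4 * (n:ℝ) := by
      have : ((2^(k+2) : ℕ):ℝ) ≤ ((4*n : ℕ):ℝ) := by
        refine Nat.cast_le.mpr ?_
        calc 2^(k+2) = 4 * 2^k := by ring
          _ ≤ 4 * n := by omega
      push_cast at this
      calc (2:ℝ)^(k+1+1) = (2:ℝ)^(k+2) := by norm_num
        _ ≤ 4 * (n:ℝ) := this
    have hb2 : ((2:ℝ)^(k+1+1))^(1/p) ≤ (4*(n:ℝ))^(1/p) :=
      Real.rpow_le_rpow (by positivity) hb1 hq0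
    have hb3 : (4*(n:ℝ))^(1/p) = (4:ℝ)^(1/p) * (n:ℝ)^(1/p) :=
      Real.mul_rpow (by norm_num) (by positivity)
    have hb4 : (4:ℝ)^(1/p) ≤ 4 := by
      calc (4:ℝ)^(1/p) ≤ (4:ℝ)^(1:ℝ) :=
            Real.rpow_le_rpow_of_exponent_le (by norm_num) hq1
        _ = 4 := Real.rpow_one 4
    have hnn : (0:ℝ) ≤ (n:ℝ)^(1/p) := Real.rpow_nonneg (by positivity) _
    calc ε * ((2:ℝ)^(k+1+1))^(1/p) ≤ ε * ((4:ℝ)^(1/p) * (n:ℝ)^(1/p)) := by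
          rw [← hb3]; exact mul_le_mul_of_nonneg_left hb2 hε.le
      _ ≤ ε * (4 * (n:ℝ)^(1/p)) := by
          exact mul_le_mul_of_nonneg_left (mul_le_mul_of_nonneg_right hb4 hnn) hε.le
      _ = 4*ε*(n:ℝ)^(1/p) := by ring
  have hall : ∀ᵐ ω ∂μ, ∀ m : ℕ, ∀ᶠ n : ℕ in atTop,
      |S n ω| ≤ 4*((m:ℝ)+1)⁻¹*(n:ℝ)^(1/p) := by
    rw [ae_all_iff]
    intro m
    exact key ((m:ℝ)+1)⁻¹ (by positivity)
  filter_upwards [hall] with ω hω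
  rw [Metric.tendsto_atTop]
  intro δ hδ
  obtain ⟨m, hm⟩ : ∃ m : ℕ, 4*((m:ℝ)+1)⁻¹ < δ := by
    obtain ⟨m, hm⟩ := exists_nat_gt (4/δ)
    refine ⟨m, ?_⟩
    have h1 : (0:ℝ) < (m:ℝ)+1 := by positivity
    rw [← div_eq_mul_inv, div_lt_iff₀ h1]
    have : 4 / δ < (m:ℝ) + 1 := by linarith
    calc (4:ℝ) = (4/δ) * δ := by field_simp
      _ < ((m:ℝ)+1) * δ := by exact mul_lt_mul_of_pos_right this hδ
      _ = δ * ((m:ℝ)+1) := by ring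
  obtain ⟨N, hN⟩ := Filter.eventually_atTop.mp (hω m)
  refine ⟨max N 1, fun n hn => ?_⟩
  have hn1 : 1 ≤ n := le_trans (le_max_right N 1) hn
  have hb := hN n (le_trans (le_max_left N 1) hn)
  have hpos : (0:ℝ) < (n:ℝ)^(1/p) :=
    Real.rpow_pos_of_pos (by exact_mod_cast Nat.lt_of_lt_of_le Nat.zero_lt_one hn1) _
  rw [Real.dist_eq, sub_zero, abs_div, abs_of_pos hpos, div_lt_iff₀ hpos]
  calc |S n ω| ≤ 4*((m:ℝ)+1)⁻¹*(n:ℝ)^(1/p) := hb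
    _ < δ * (n:ℝ)^(1/p) := mul_lt_mul_of_pos_right hm hpos
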